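/- The Cayley transform C(A) = (I - A)⁻¹(I + A) is Lipschitz continuous on g_Q = {A : QA + AᵀQ = 0} (Q symmetric positive definite) with Lipschitz constant 2 with respect to the operator norm induced by the Q-norm. -/

import Mathlib

open Matrix

/-- The `Q`-norm of a vector, `‖x‖_Q = √(xᵀ Q x)`. -/
noncomputable def qnorm {n : ℕ} (Q : Matrix (Fin n) (Fin n) ℝ) (x : Fin n → ℝ) : ℝ :=
  Real.sqrt (x ⬝ᵥ Q.mulVec x)

/-- The operator norm on `ℝ^{n×n}` induced by the `Q`-norm. -/
noncomputable def qOpNorm {n : ℕ} (Q M : Matrix (Fin n) (Fin n) ℝ) : ℝ :=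
  sInf {c : ℝ | 0 ≤ c ∧ ∀ x : Fin n → ℝ, qnorm Q (M.mulVec x) ≤ c * qnorm Q x}

/-- The Cayley transform `C(A) = (I - A)⁻¹ (I + A)`. -/
noncomputable def cayley {n : ℕ} (A : Matrix (Fin n) (Fin n) ℝ) : Matrix (Fin n) (Fin n) ℝ :=
  (1 - A)⁻¹ * (1 + A)

namespace Stmt9Aux

variable {n : ℕ}

lemma dot_nonneg {Q : Matrix (Fin n) (Fin n) ℝ} (hQ : Q.PosDef) (x : Fin n → ℝ) :
    0 ≤ x ⬝ᵥ Q.mulVec x := by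
  simpa using hQ.posSemidef.dotProduct_mulVec_nonneg x

lemma dot_pos {Q : Matrix (Fin n) (Fin n) ℝ} (hQ : Q.PosDef) {x : Fin n → ℝ} (hx : x ≠ 0) :
    0 < x ⬝ᵥ Q.mulVec x := by
  simpa using hQ.dotProduct_mulVec_pos hx

lemma cross {Q A : Matrix (Fin n) (Fin n) ℝ} (hA : Q * A + Aᵀ * Q = 0) (x : Fin n → ℝ) :
    x ⬝ᵥ Q.mulVec (A.mulVec x) + (A.mulVec x) ⬝ᵥ Q.mulVec x = 0 := by
  have h2 : (A.mulVec x) ⬝ᵥ Q.mulVec x = x ⬝ᵥ (Aᵀ * Q).mulVec x := by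
    rw [← Matrix.mulVec_mulVec, Matrix.dotProduct_mulVec x Aᵀ, Matrix.vecMul_transpose]
  rw [Matrix.mulVec_mulVec, h2, ← dotProduct_add, ← Matrix.add_mulVec, hA,
    Matrix.zero_mulVec, dotProduct_zero]

end Stmt9Aux

namespace Stmt9Aux

variable {n : ℕ}

lemma expand {Q A : Matrix (Fin n) (Fin n) ℝ} (hA : Q * A + Aᵀ * Q = 0) (x : Fin n → ℝ) :
    ((1 - A).mulVec x) ⬝ᵥ Q.mulVec ((1 - A).mulVec x)
      = x ⬝ᵥ Q.mulVec x + (A.mulVec x) ⬝ᵥ Q.mulVec (A.mulVec x) := by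
  have h := cross hA x
  have hx : (1 - A).mulVec x = x - A.mulVec x := by
    rw [Matrix.sub_mulVec, Matrix.one_mulVec]
  rw [hx, Matrix.mulVec_sub]
  simp only [sub_dotProduct, dotProduct_sub]
  linarith

lemma qnorm_le_one_sub {Q A : Matrix (Fin n) (Fin n) ℝ} (hQ : Q.PosDef)
    (hA : Q * A + Aᵀ * Q = 0) (x : Fin n → ℝ) :
    qnorm Q x ≤ qnorm Q ((1 - A).mulVec x) := by
  apply Real.sqrt_le_sqrt
  rw [expand hA x]
  exact le_add_of_nonneg_right (dot_nonneg hQ _)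

lemma isUnit_one_sub {Q A : Matrix (Fin n) (Fin n) ℝ} (hQ : Q.PosDef)
    (hA : Q * A + Aᵀ * Q = 0) : IsUnit (1 - A) := by
  rw [← Matrix.mulVec_injective_iff_isUnit]
  intro x y hxy
  have hz : (1 - A).mulVec (x - y) = 0 := by
    rw [Matrix.mulVec_sub, hxy, sub_self]
  by_contra hne
  have hne' : x - y ≠ 0 := sub_ne_zero.mpr (fun h => hne (by rw [h]))
  have hp : 0 < (x - y) ⬝ᵥ Q.mulVec (x - y) := dot_pos hQ hne'
  have h := expand hA (x - y)
  rw [hz] at h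
  simp only [Matrix.mulVec_zero, dotProduct_zero] at h
  have := dot_nonneg hQ (A.mulVec (x - y))
  linarith

lemma inv_bound {Q A : Matrix (Fin n) (Fin n) ℝ} (hQ : Q.PosDef)
    (hA : Q * A + Aᵀ * Q = 0) (x : Fin n → ℝ) :
    qnorm Q ((1 - A)⁻¹.mulVec x) ≤ qnorm Q x := by
  have hu : IsUnit (1 - A).det := (Matrix.isUnit_iff_isUnit_det _).mp (isUnit_one_sub hQ hA)
  have hfix : (1 - A).mulVec ((1 - A)⁻¹.mulVec x) = x := by
    rw [Matrix.mulVec_mulVec, Matrix.mul_nonsing_inv _ hu, Matrix.one_mulVec]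
  calc qnorm Q ((1 - A)⁻¹.mulVec x) ≤ qnorm Q ((1 - A).mulVec ((1 - A)⁻¹.mulVec x)) :=
        qnorm_le_one_sub hQ hA _
    _ = qnorm Q x := by rw [hfix]

end Stmt9Aux

namespace Stmt9Aux

variable {n : ℕ}

lemma cayley_sub {Q A B : Matrix (Fin n) (Fin n) ℝ} (hQ : Q.PosDef)
    (hA : Q * A + Aᵀ * Q = 0) (hB : Q * B + Bᵀ * Q = 0) :
    cayley A - cayley B = (1 - A)⁻¹ * ((A - B) + (A - B)) * (1 - B)⁻¹ := by
  have huA : IsUnit (1 - A).det := (Matrix.isUnit_iff_isUnit_det _).mp (isUnit_one_sub hQ hA)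
  have huB : IsUnit (1 - B).det := (Matrix.isUnit_iff_isUnit_det _).mp (isUnit_one_sub hQ hB)
  have hPA : (1 - A)⁻¹ * (1 - A) = 1 := Matrix.nonsing_inv_mul _ huA
  have hRB : (1 - B) * (1 - B)⁻¹ = 1 := Matrix.mul_nonsing_inv _ huB
  have hRB' : (1 - B)⁻¹ * (1 - B) = 1 := Matrix.nonsing_inv_mul _ huB
  have hBR : (1 + B) * (1 - B) = (1 - B) * (1 + B) := by noncomm_ring
  have hcomm : (1 - B)⁻¹ * (1 + B) = (1 + B) * (1 - B)⁻¹ := by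
    calc (1 - B)⁻¹ * (1 + B) = (1 - B)⁻¹ * (1 + B) * ((1 - B) * (1 - B)⁻¹) := by
          rw [hRB, mul_one]
      _ = (1 - B)⁻¹ * ((1 + B) * (1 - B)) * (1 - B)⁻¹ := by
          simp only [Matrix.mul_assoc]
      _ = (1 - B)⁻¹ * (1 - B) * ((1 + B) * (1 - B)⁻¹) := by
          rw [hBR]; simp only [Matrix.mul_assoc]
      _ = (1 + B) * (1 - B)⁻¹ := by rw [hRB', one_mul]
  have key : (1 + A) * (1 - B) - (1 - A) * (1 + B) = (A - B) + (A - B) := by noncomm_ring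
  have main : (1 - A)⁻¹ * ((1 + A) * (1 - B) - (1 - A) * (1 + B)) * (1 - B)⁻¹
      = cayley A - cayley B := by
    rw [Matrix.mul_sub, Matrix.sub_mul]
    congr 1
    · show (1 - A)⁻¹ * ((1 + A) * (1 - B)) * (1 - B)⁻¹ = cayley A
      rw [cayley]
      simp only [Matrix.mul_assoc]
      rw [hRB, mul_one]
    · show (1 - A)⁻¹ * ((1 - A) * (1 + B)) * (1 - B)⁻¹ = cayley B
      rw [cayley, show (1 - A)⁻¹ * ((1 - A) * (1 + B)) * (1 - B)⁻¹
        = (1 - A)⁻¹ * (1 - A) * (1 + B) * (1 - B)⁻¹ by simp only [Matrix.mul_assoc],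
        hPA, one_mul, hcomm]
  rw [← main, key]

lemma qnorm_double {Q : Matrix (Fin n) (Fin n) ℝ} (hQ : Q.PosDef) (u : Fin n → ℝ) :
    qnorm Q (u + u) = 2 * qnorm Q u := by
  have h : (u + u) ⬝ᵥ Q.mulVec (u + u) = 4 * (u ⬝ᵥ Q.mulVec u) := by
    rw [Matrix.mulVec_add]
    simp only [add_dotProduct, dotProduct_add]
    ring
  rw [qnorm, h, show (4 : ℝ) = 2 ^ 2 by norm_num, Real.sqrt_mul (by positivity),
    Real.sqrt_sq (by norm_num : (0:ℝ) ≤ 2)]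
  rfl

end Stmt9Aux

namespace Stmt9Aux

variable {n : ℕ}

lemma frobenius_bound (N : Matrix (Fin n) (Fin n) ℝ) (w : Fin n → ℝ) :
    (N.mulVec w) ⬝ᵥ (N.mulVec w) ≤ (∑ i, ∑ j, (N i j) ^ 2) * (w ⬝ᵥ w) := by
  have hw : w ⬝ᵥ w = ∑ j, (w j) ^ 2 := by
    simp [dotProduct, sq]
  rw [hw, dotProduct, Finset.sum_mul]
  apply Finset.sum_le_sum
  intro i _
  have := Finset.sum_mul_sq_le_sq_mul_sq Finset.univ (fun j => N i j) w
  calc N.mulVec w i * N.mulVec w i = (∑ j, N i j * w j) ^ 2 := by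
        simp [Matrix.mulVec, dotProduct, sq]
    _ ≤ (∑ j, (N i j) ^ 2) * ∑ j, (w j) ^ 2 := this

open scoped MatrixOrder in
lemma exists_bound {Q : Matrix (Fin n) (Fin n) ℝ} (hQ : Q.PosDef)
    (M : Matrix (Fin n) (Fin n) ℝ) :
    ∃ c, 0 ≤ c ∧ ∀ x, qnorm Q (M.mulVec x) ≤ c * qnorm Q x := by
  set S := CFC.sqrt Q with hSdef
  have hS2 : S * S = Q := CFC.sqrt_mul_sqrt_self Q (Matrix.nonneg_iff_posSemidef.mpr hQ.posSemidef)
  have hSh : S.IsHermitian := (Matrix.nonneg_iff_posSemidef.mp (CFC.sqrt_nonneg Q)).isHermitian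
  have hSt : Sᵀ = S := by
    rw [← Matrix.conjTranspose_eq_transpose_of_trivial]; exact hSh
  have hSd : IsUnit S.det := by
    rw [isUnit_iff_ne_zero]
    intro h
    have : Q.det = 0 := by rw [← hS2, Matrix.det_mul, h, mul_zero]
    exact absurd this (ne_of_gt hQ.det_pos)
  have hSinv : S⁻¹ * S = 1 := Matrix.nonsing_inv_mul _ hSd
  -- qnorm as euclidean norm of S x
  have hqn : ∀ v : Fin n → ℝ, qnorm Q v = Real.sqrt ((S.mulVec v) ⬝ᵥ (S.mulVec v)) := by
    intro v
    rw [qnorm]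
    congr 1
    rw [Matrix.dotProduct_mulVec (S.mulVec v) S v, ← hSt, Matrix.vecMul_transpose, hSt,
      Matrix.mulVec_mulVec, hS2, dotProduct_comm]
  set N := S * M * S⁻¹ with hNdef
  refine ⟨Real.sqrt (∑ i, ∑ j, (N i j) ^ 2), Real.sqrt_nonneg _, fun x => ?_⟩
  have hNS : N.mulVec (S.mulVec x) = S.mulVec (M.mulVec x) := by
    have hNSmul : N * S = S * M := by
      rw [hNdef, Matrix.mul_assoc, hSinv, mul_one]
    rw [Matrix.mulVec_mulVec, hNSmul, ← Matrix.mulVec_mulVec]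
  rw [hqn, hqn x, ← hNS, ← Real.sqrt_mul (by positivity)]
  exact Real.sqrt_le_sqrt (frobenius_bound N (S.mulVec x))

end Stmt9Aux

/-- The Cayley transform is Lipschitz on `g_Q` with Lipschitz constant `2` with
respect to the operator norm induced by the `Q`-norm. -/
theorem stmt9 {n : ℕ} (Q A B : Matrix (Fin n) (Fin n) ℝ)
    (hQ : Q.PosDef) (hA : Q * A + Aᵀ * Q = 0) (hB : Q * B + Bᵀ * Q = 0) :
    qOpNorm Q (cayley A - cayley B) ≤ 2 * qOpNorm Q (A - B) := by
  unfold qOpNorm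
  set S : Set ℝ :=
    {c : ℝ | 0 ≤ c ∧ ∀ x : Fin n → ℝ, qnorm Q ((A - B).mulVec x) ≤ c * qnorm Q x} with hS
  obtain ⟨c₀, hc₀⟩ := Stmt9Aux.exists_bound hQ (A - B)
  have hne : S.Nonempty := ⟨c₀, hc₀⟩
  have hInf0 : 0 ≤ sInf S := le_csInf hne fun c hc => hc.1
  have hstep : ∀ (x : Fin n → ℝ), ∀ c ∈ S,
      qnorm Q ((cayley A - cayley B).mulVec x) ≤ 2 * c * qnorm Q x := by
    intro x c hc
    have hid := Stmt9Aux.cayley_sub hQ hA hB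
    set y := (1 - B)⁻¹.mulVec x with hy
    set u := (A - B).mulVec y with hu
    have h1 : (cayley A - cayley B).mulVec x = (1 - A)⁻¹.mulVec (u + u) := by
      rw [hid, ← Matrix.mulVec_mulVec, ← Matrix.mulVec_mulVec, Matrix.add_mulVec]
    rw [h1]
    have hqy : qnorm Q y ≤ qnorm Q x := Stmt9Aux.inv_bound hQ hB x
    have hqu : qnorm Q u ≤ c * qnorm Q y := hc.2 y
    have h2 : qnorm Q ((1 - A)⁻¹.mulVec (u + u)) ≤ qnorm Q (u + u) :=
      Stmt9Aux.inv_bound hQ hA _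
    rw [Stmt9Aux.qnorm_double hQ u] at h2
    have hc0 := hc.1
    have hy0 : 0 ≤ qnorm Q y := Real.sqrt_nonneg _
    nlinarith
  have key : ∀ x : Fin n → ℝ,
      qnorm Q ((cayley A - cayley B).mulVec x) ≤ 2 * sInf S * qnorm Q x := by
    intro x
    by_cases hx : x = 0
    · subst hx
      simp [qnorm, Matrix.mulVec_zero]
    · have hxpos : 0 < qnorm Q x := Real.sqrt_pos.mpr (Stmt9Aux.dot_pos hQ hx)
      have h2x : 0 < 2 * qnorm Q x := by linarith
      have ht : qnorm Q ((cayley A - cayley B).mulVec x) / (2 * qnorm Q x) ≤ sInf S :=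
        le_csInf hne fun c hc => (div_le_iff₀ h2x).mpr (by
          have := hstep x c hc; linarith)
      have := (div_le_iff₀ h2x).mp ht
      linarith
  have hbdd : BddBelow {c : ℝ | 0 ≤ c ∧ ∀ x : Fin n → ℝ,
      qnorm Q ((cayley A - cayley B).mulVec x) ≤ c * qnorm Q x} :=
    ⟨0, fun c hc => hc.1⟩
  exact csInf_le hbdd ⟨by linarith, key⟩
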